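/- Let v(t,x) be a C¹ solution of the incompressible Euler equations ∂_t v + (v·∇)v = −∇p, div v = 0 on [0,T] × 𝕋^d, and let f(t,x,ξ) be a smooth compactly supported solution of the kinetic equation ∂_t f + ξ·∇_x f − (1/ε)∇φ̃·∇_ξ f = 0 whose total energy E(t) = (1/2)∫ f|ξ|² dxdξ + (1/2)∫ρ|∇φ̃|²dx is conserved. Then the modulated kinetic energy satisfies the identity d/dt [ (1/2)∫ f(t,x,ξ)|ξ − v(t,x)|² dxdξ + (1/2)∫ρ|∇φ̃|²dx ] = −∫ f·(ξ−v)·(∇v)(ξ−v) dxdξ + (1/ε)∫ f v·∇φ̃ dxdξ − ∫ f (v−ξ)·∇p dxdξ. -/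

import Mathlib

open MeasureTheory Real RealInnerProductSpace

noncomputable section

/-- A fundamental domain of the torus `𝕋^d = ℝ^d/ℤ^d`. -/
def fundDom (d : ℕ) : Set (EuclideanSpace ℝ (Fin d)) := {x | ∀ i, x i ∈ Set.Ioc (0:ℝ) 1}

/-- `ℤ^d`-periodicity of a function on `ℝ^d`, i.e. a function on the torus. -/
def ZPeriodic {d : ℕ} {α : Type*} (f : EuclideanSpace ℝ (Fin d) → α) : Prop :=
  ∀ (x : EuclideanSpace ℝ (Fin d)) (k : Fin d → ℤ), f (WithLp.toLp 2 (fun i => x i + (k i : ℝ))) = f x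

def insR {n : ℕ} (j : Fin (n+1)) (c : ℝ) (x : Fin n → ℝ) : Fin (n+1) → ℝ := j.insertNth c x

lemma insR_apply_same {n : ℕ} (j : Fin (n+1)) (c : ℝ) (x : Fin n → ℝ) : insR j c x j = c :=
  by simp [insR]

lemma sum_ite_fderiv {n : ℕ} (H : (Fin (n+1) → ℝ) → ℝ) (i : Fin (n+1)) :
    (fun x => ∑ j : Fin (n+1), (if j = i then fderiv ℝ H x else 0) (Pi.single j 1))
      = fun x => fderiv ℝ H x (Pi.single i 1) := by
  funext x
  rw [Finset.sum_eq_single i]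
  · simp
  · intro j _ hji; simp [hji]
  · intro h; exact absurd (Finset.mem_univ i) h

lemma pi_periodic_integral_partial_zero {n : ℕ} (H : (Fin (n+1) → ℝ) → ℝ)
    (hH : ContDiff ℝ 1 H)
    (hper : ∀ (y : Fin (n+1) → ℝ) (k : Fin (n+1) → ℤ), H (fun j => y j + (k j : ℝ)) = H y)
    (i : Fin (n+1)) :
    ∫ y in Set.Icc (0 : Fin (n+1) → ℝ) 1, fderiv ℝ H y (Pi.single i 1) = 0 := by
  have hdiff := hH.differentiable one_ne_zero
  have hcont : Continuous fun y => fderiv ℝ H y (Pi.single i 1) :=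
    (hH.continuous_fderiv one_ne_zero).clm_apply continuous_const
  have key := MeasureTheory.integral_divergence_of_hasFDerivAt_off_countable'
      (0 : Fin (n+1) → ℝ) 1 zero_le_one
      (fun j => if j = i then H else 0)
      (fun j y => if j = i then fderiv ℝ H y else 0)
      ∅ Set.countable_empty
      (fun j => by
        by_cases hj : j = i
        · simpa [hj] using hH.continuous.continuousOn
        · simp only [hj, if_false]; exact continuousOn_const)
      (fun x _ j => by
        by_cases hj : j = i
        · simpa [hj] using (hdiff x).hasFDerivAt
        · simp only [hj, if_false]; exact hasFDerivAt_const (0:ℝ) x)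
      (by
        rw [sum_ite_fderiv H i]
        exact hcont.continuousOn.integrableOn_compact isCompact_Icc)
  rw [sum_ite_fderiv H i] at key
  rw [key]
  apply Finset.sum_eq_zero
  intro j _
  by_cases hj : j = i
  · subst hj
    have hpt : ∀ x : Fin n → ℝ, ∀ c₀ : ℝ,
        H (insR j (c₀ + 1) x) = H (insR j c₀ x) := by
      intro x c₀
      have h2 := hper (insR j c₀ x) (Pi.single j (1:ℤ))
      have h3 : (fun l => insR j c₀ x l + ((Pi.single j (1:ℤ) : Fin (n+1) → ℤ) l : ℝ))
          = insR j (c₀ + 1) x := by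
        funext l
        rcases eq_or_ne l j with hl | hl
        · subst hl; simp [insR]
        · obtain ⟨k, rfl⟩ := Fin.exists_succAbove_eq hl
          simp [insR, Fin.insertNth_apply_succAbove, Pi.single_eq_of_ne hl]
      rw [h3] at h2
      exact h2
    simp only [if_pos rfl]
    rw [sub_eq_zero]
    apply integral_congr_ae
    filter_upwards with x
    show H (insR j (1:ℝ) x) = H (insR j (0:ℝ) x)
    simpa using hpt x 0
  · simp [hj]

lemma pi_compactsupport_integral_partial_zero {n : ℕ} (H : (Fin (n+1) → ℝ) → ℝ)
    (hH : ContDiff ℝ 1 H) (hsupp : HasCompactSupport H) (i : Fin (n+1)) :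
    ∫ y, fderiv ℝ H y (Pi.single i 1) = 0 := by
  have hdiff := hH.differentiable one_ne_zero
  have hcont : Continuous fun y => fderiv ℝ H y (Pi.single i 1) :=
    (hH.continuous_fderiv one_ne_zero).clm_apply continuous_const
  obtain ⟨r, hr⟩ := hsupp.isBounded.subset_closedBall 0
  set R : ℝ := max r 0 + 1 with hR
  have hrR : r < R := lt_of_le_of_lt (le_max_left r 0) (lt_add_one _)
  have hzero : ∀ y : Fin (n+1) → ℝ, r < ‖y‖ → H y = 0 := by
    intro y hy
    apply image_eq_zero_of_notMem_tsupport
    intro hmem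
    have h2 := hr hmem
    rw [Metric.mem_closedBall, dist_zero_right] at h2
    linarith
  have hfzero : ∀ y : Fin (n+1) → ℝ, r < ‖y‖ → fderiv ℝ H y = 0 := by
    intro y hy
    have hny : y ∉ tsupport H := fun hmem => by
      have h2 := hr hmem
      rw [Metric.mem_closedBall, dist_zero_right] at h2
      linarith
    have heq : H =ᶠ[nhds y] 0 := notMem_tsupport_iff_eventuallyEq.mp hny
    rw [heq.fderiv_eq]
    show fderiv ℝ (fun _ => (0:ℝ)) y = 0
    exact fderiv_const_apply 0
  have hab : (fun _ : Fin (n+1) => -R) ≤ fun _ => R := fun _ => by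
    simp only; nlinarith [le_max_right r 0, le_max_left r 0]
  have key := MeasureTheory.integral_divergence_of_hasFDerivAt_off_countable'
      (fun _ : Fin (n+1) => -R) (fun _ => R) hab
      (fun j => if j = i then H else 0)
      (fun j y => if j = i then fderiv ℝ H y else 0)
      ∅ Set.countable_empty
      (fun j => by
        by_cases hj : j = i
        · simpa [hj] using hH.continuous.continuousOn
        · simp only [hj, if_false]; exact continuousOn_const)
      (fun x _ j => by
        by_cases hj : j = i
        · simpa [hj] using (hdiff x).hasFDerivAt
        · simp only [hj, if_false]; exact hasFDerivAt_const (0:ℝ) x)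
      (by
        rw [sum_ite_fderiv H i]
        exact hcont.continuousOn.integrableOn_compact isCompact_Icc)
  rw [sum_ite_fderiv H i] at key
  have hrestrict : (∫ y, fderiv ℝ H y (Pi.single i 1))
      = ∫ y in Set.Icc (fun _ : Fin (n+1) => -R) (fun _ => R), fderiv ℝ H y (Pi.single i 1) := by
    rw [setIntegral_eq_integral_of_forall_compl_eq_zero]
    intro y hy
    have hry : r < ‖y‖ := by
      simp only [Set.mem_Icc, Pi.le_def, not_and_or, not_forall] at hy
      rcases hy with ⟨j, hj⟩ | ⟨j, hj⟩
      · push_neg at hj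
        have h1 : R < -(y j) := by linarith
        have h2 : -(y j) ≤ |y j| := neg_le_abs _
        have h3 : |y j| ≤ ‖y‖ := by
          simpa [Real.norm_eq_abs] using norm_le_pi_norm y j
        linarith
      · push_neg at hj
        have h2 : y j ≤ |y j| := le_abs_self _
        have h3 : |y j| ≤ ‖y‖ := by
          simpa [Real.norm_eq_abs] using norm_le_pi_norm y j
        linarith
    rw [hfzero y hry]
    rfl
  rw [hrestrict, key]
  apply Finset.sum_eq_zero
  intro j _
  by_cases hj : j = i
  · subst hj
    have hface : ∀ (c : ℝ), R ≤ |c| → ∀ x : Fin n → ℝ, H (insR j c x) = 0 := by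
      intro c hc x
      apply hzero
      calc r < R := hrR
        _ ≤ |c| := hc
        _ = |(insR j c x) j| := (congrArg abs (insR_apply_same j c x)).symm
        _ ≤ ‖insR j c x‖ := by
          simpa [Real.norm_eq_abs] using norm_le_pi_norm (insR j c x) j
    have hRpos : (0:ℝ) < R := by nlinarith [le_max_right r 0]
    simp only [if_pos rfl]
    rw [sub_eq_zero]
    apply integral_congr_ae
    filter_upwards with x
    show H (insR j R x) = H (insR j (-R) x)
    rw [hface R (le_of_eq (abs_of_pos hRpos).symm) x,
        hface (-R) (by rw [abs_neg, abs_of_pos hRpos]) x]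
  · simp [hj]

variable {d : ℕ}

lemma fundDom_measurableSet : MeasurableSet (fundDom d) := by
  have : fundDom d = ⋂ i, (fun x : EuclideanSpace ℝ (Fin d) => x i) ⁻¹' Set.Ioc (0:ℝ) 1 := by
    ext x; simp [fundDom, Set.mem_iInter]
  rw [this]
  exact MeasurableSet.iInter fun i =>
    ((EuclideanSpace.proj (𝕜 := ℝ) i).continuous.measurable) measurableSet_Ioc

lemma fundDom_subset_ball : fundDom d ⊆ Metric.closedBall 0 (Real.sqrt d) := by
  intro x hx
  rw [Metric.mem_closedBall, dist_zero_right, EuclideanSpace.norm_eq]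
  apply Real.sqrt_le_sqrt
  calc (∑ i, ‖x i‖ ^ 2) ≤ ∑ _i : Fin d, 1 := by
        apply Finset.sum_le_sum
        intro i _
        have h1 := (hx i).1
        have h2 := (hx i).2
        rw [Real.norm_eq_abs, sq_abs]
        nlinarith
    _ = d := by simp
  
lemma integrableOn_fundDom_of_continuous {F : EuclideanSpace ℝ (Fin d) → ℝ}
    (hF : Continuous F) : IntegrableOn F (fundDom d) := by
  apply IntegrableOn.mono_set _ fundDom_subset_ball
  exact (hF.continuousOn).integrableOn_compact (isCompact_closedBall 0 _)

-- transport infrastructure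
lemma euclid_coord_symm (y : Fin d → ℝ) (i : Fin d) :
    ((EuclideanSpace.equiv (Fin d) ℝ).symm y) i = y i := rfl

lemma euclid_fderiv_comp (h : EuclideanSpace ℝ (Fin d) → ℝ) (hh : Differentiable ℝ h)
    (y : Fin d → ℝ) :
    fderiv ℝ (fun z : Fin d → ℝ => h ((EuclideanSpace.equiv (Fin d) ℝ).symm z)) y
      = (fderiv ℝ h ((EuclideanSpace.equiv (Fin d) ℝ).symm y)).comp
          ((EuclideanSpace.equiv (Fin d) ℝ).symm : (Fin d → ℝ) →L[ℝ] EuclideanSpace ℝ (Fin d)) := by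
  have h2 : fderiv ℝ (⇑(EuclideanSpace.equiv (Fin d) ℝ).symm) y
      = ((EuclideanSpace.equiv (Fin d) ℝ).symm :
          (Fin d → ℝ) →L[ℝ] EuclideanSpace ℝ (Fin d)) :=
    (EuclideanSpace.equiv (Fin d) ℝ).symm.fderiv
  have h3 := fderiv_comp (𝕜 := ℝ) y (hh ((EuclideanSpace.equiv (Fin d) ℝ).symm y))
    ((EuclideanSpace.equiv (Fin d) ℝ).symm.differentiable y)
  rw [h2] at h3
  exact h3

lemma euclid_symm_single (i : Fin d) :
    (EuclideanSpace.equiv (Fin d) ℝ).symm (Pi.single i 1) = EuclideanSpace.single i (1:ℝ) := rfl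

example : True := trivial

lemma periodic_setIntegral_fderiv_zero (h : EuclideanSpace ℝ (Fin d) → ℝ)
    (hh : ContDiff ℝ 1 h) (hper : ZPeriodic h) (w : EuclideanSpace ℝ (Fin d)) :
    ∫ x in fundDom d, fderiv ℝ h x w = 0 := by
  classical
  have hrepr : w = ∑ i, w i • EuclideanSpace.single i (1:ℝ) := by
    apply PiLp.ext
    intro j
    have hs : (∑ i, w i • EuclideanSpace.single i (1:ℝ)) j
        = ∑ i, (w i • EuclideanSpace.single i (1:ℝ)) j := by
      rw [WithLp.ofLp_sum]; exact Finset.sum_apply j Finset.univ _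
    rw [hs, Finset.sum_eq_single j]
    · simp [EuclideanSpace.single_apply]
    · intro i _ hij
      simp [EuclideanSpace.single_apply, if_neg (Ne.symm hij)]
    · intro hj; exact absurd (Finset.mem_univ j) hj
  have hint : ∀ u : EuclideanSpace ℝ (Fin d),
      IntegrableOn (fun x => fderiv ℝ h x u) (fundDom d) :=
    fun u => integrableOn_fundDom_of_continuous
      ((hh.continuous_fderiv one_ne_zero).clm_apply continuous_const)
  have hsingle : ∀ i : Fin d,
      ∫ x in fundDom d, fderiv ℝ h x (EuclideanSpace.single i (1:ℝ)) = 0 := by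
    intro i
    obtain ⟨n, rfl⟩ : ∃ n, d = n + 1 := ⟨d - 1, (Nat.succ_pred_eq_of_pos i.pos).symm⟩
    set L := EuclideanSpace.equiv (Fin (n+1)) ℝ
    set H : (Fin (n+1) → ℝ) → ℝ := fun z => h (L.symm z) with hH
    have hHc : ContDiff ℝ 1 H := hh.comp L.symm.contDiff
    have hHper : ∀ (y : Fin (n+1) → ℝ) (k : Fin (n+1) → ℤ),
        H (fun j => y j + (k j : ℝ)) = H y := by
      intro y k
      have := hper (L.symm y) k
      exact this
    have key := pi_periodic_integral_partial_zero H hHc hHper i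
    have mp := EuclideanSpace.volume_preserving_symm_measurableEquiv_toLp (Fin (n+1))
    have emb := (MeasurableEquiv.toLp 2 (Fin (n+1) → ℝ)).symm.measurableEmbedding
    have transport := mp.setIntegral_preimage_emb emb
        (fun y => fderiv ℝ H y (Pi.single i 1)) (Set.univ.pi fun _ => Set.Ioc (0:ℝ) 1)
    have hpre : (MeasurableEquiv.toLp 2 (Fin (n+1) → ℝ)).symm ⁻¹'
        (Set.univ.pi fun _ => Set.Ioc (0:ℝ) 1) = fundDom (n+1) := by
      ext x
      simp [fundDom, Set.mem_pi, MeasurableEquiv.coe_toLp_symm]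
    have hGe : ∀ x : EuclideanSpace ℝ (Fin (n+1)),
        fderiv ℝ H ((MeasurableEquiv.toLp 2 (Fin (n+1) → ℝ)).symm x) (Pi.single i 1)
          = fderiv ℝ h x (EuclideanSpace.single i (1:ℝ)) := by
      intro x
      rw [euclid_fderiv_comp h (hh.differentiable one_ne_zero)]
      rfl
    rw [hpre] at transport
    rw [← setIntegral_congr_ae (μ := volume) fundDom_measurableSet
      (Filter.Eventually.of_forall fun x _ => hGe x), transport]
    have hae := Measure.univ_pi_Ioc_ae_eq_Icc
      (μ := fun _ : Fin (n+1) => (volume : Measure ℝ)) (f := fun _ => (0:ℝ)) (g := fun _ => (1:ℝ))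
    rw [← volume_pi] at hae
    rw [setIntegral_congr_set hae]
    exact key
  calc ∫ x in fundDom d, fderiv ℝ h x w
      = ∫ x in fundDom d, ∑ i, w i * fderiv ℝ h x (EuclideanSpace.single i (1:ℝ)) := by
        apply setIntegral_congr_ae fundDom_measurableSet
        filter_upwards with x _
        conv_lhs => rw [hrepr]
        rw [map_sum]
        congr 1
        funext i
        rw [(fderiv ℝ h x).map_smul]
        rfl
    _ = ∑ i, ∫ x in fundDom d, w i * fderiv ℝ h x (EuclideanSpace.single i (1:ℝ)) :=
        integral_finset_sum _ (fun i _ => (hint _).const_mul (w i))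
    _ = ∑ i, w i * ∫ x in fundDom d, fderiv ℝ h x (EuclideanSpace.single i (1:ℝ)) :=
        Finset.sum_congr rfl fun i _ => integral_const_mul _ _
    _ = 0 := by simp [hsingle]

lemma compactsupport_integral_fderiv_zero (h : EuclideanSpace ℝ (Fin d) → ℝ)
    (hh : ContDiff ℝ 1 h) (hcs : HasCompactSupport h) (w : EuclideanSpace ℝ (Fin d)) :
    ∫ x, fderiv ℝ h x w = 0 := by
  classical
  have hrepr : w = ∑ i, w i • EuclideanSpace.single i (1:ℝ) := by
    apply PiLp.ext
    intro j
    have hs : (∑ i, w i • EuclideanSpace.single i (1:ℝ)) j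
        = ∑ i, (w i • EuclideanSpace.single i (1:ℝ)) j := by
      rw [WithLp.ofLp_sum]; exact Finset.sum_apply j Finset.univ _
    rw [hs, Finset.sum_eq_single j]
    · simp [EuclideanSpace.single_apply]
    · intro i _ hij
      simp [EuclideanSpace.single_apply, if_neg (Ne.symm hij)]
    · intro hj; exact absurd (Finset.mem_univ j) hj
  have hint : ∀ u : EuclideanSpace ℝ (Fin d),
      Integrable (fun x => fderiv ℝ h x u) := by
    intro u
    apply Continuous.integrable_of_hasCompactSupport
      ((hh.continuous_fderiv one_ne_zero).clm_apply continuous_const)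
    exact (hcs.fderiv ℝ).comp_left (g := fun L : _ →L[ℝ] ℝ => L u) rfl
  have hsingle : ∀ i : Fin d,
      ∫ x, fderiv ℝ h x (EuclideanSpace.single i (1:ℝ)) = 0 := by
    intro i
    obtain ⟨n, rfl⟩ : ∃ n, d = n + 1 := ⟨d - 1, (Nat.succ_pred_eq_of_pos i.pos).symm⟩
    set L := EuclideanSpace.equiv (Fin (n+1)) ℝ
    set H : (Fin (n+1) → ℝ) → ℝ := fun z => h (L.symm z) with hH
    have hHc : ContDiff ℝ 1 H := hh.comp L.symm.contDiff
    have hHcs : HasCompactSupport H :=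
      hcs.comp_homeomorph (L.symm.toHomeomorph)
    have key := pi_compactsupport_integral_partial_zero H hHc hHcs i
    have mp := EuclideanSpace.volume_preserving_symm_measurableEquiv_toLp (Fin (n+1))
    have emb := (MeasurableEquiv.toLp 2 (Fin (n+1) → ℝ)).symm.measurableEmbedding
    have transport := mp.integral_comp emb (fun y => fderiv ℝ H y (Pi.single i 1))
    have hGe : ∀ x : EuclideanSpace ℝ (Fin (n+1)),
        fderiv ℝ H ((MeasurableEquiv.toLp 2 (Fin (n+1) → ℝ)).symm x) (Pi.single i 1)
          = fderiv ℝ h x (EuclideanSpace.single i (1:ℝ)) := by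
      intro x
      rw [euclid_fderiv_comp h (hh.differentiable one_ne_zero)]
      rfl
    rw [← key, ← transport]
    exact integral_congr_ae (Filter.Eventually.of_forall fun x => (hGe x).symm)
  calc ∫ x, fderiv ℝ h x w
      = ∫ x, ∑ i, w i * fderiv ℝ h x (EuclideanSpace.single i (1:ℝ)) := by
        apply integral_congr_ae
        filter_upwards with x
        conv_lhs => rw [hrepr]
        rw [map_sum]
        congr 1
        funext i
        rw [(fderiv ℝ h x).map_smul]
        rfl
    _ = ∑ i, ∫ x, w i * fderiv ℝ h x (EuclideanSpace.single i (1:ℝ)) :=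
        integral_finset_sum _ (fun i _ => (hint _).const_mul (w i))
    _ = ∑ i, w i * ∫ x, fderiv ℝ h x (EuclideanSpace.single i (1:ℝ)) :=
        Finset.sum_congr rfl fun i _ => integral_const_mul _ _
    _ = 0 := by simp [hsingle]
section Part3
open MeasureTheory Real RealInnerProductSpace
variable {d : ℕ}

local notation "E" => EuclideanSpace ℝ (Fin d)

noncomputable def prodDom (d : ℕ) : Measure (EuclideanSpace ℝ (Fin d) × EuclideanSpace ℝ (Fin d)) :=
  (volume.restrict (fundDom d)).prod volume

instance prodDom_sfinite : SFinite (prodDom d) := by unfold prodDom; infer_instance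

lemma ae_fst_mem_fundDom : ∀ᵐ q : E × E ∂(prodDom d), q.1 ∈ fundDom d := by
  rw [MeasureTheory.ae_iff]
  have hset : {q : E × E | ¬ q.1 ∈ fundDom d} = (fundDom d)ᶜ ×ˢ Set.univ := by
    ext q; simp [Set.mem_prod]
  rw [hset]
  simp only [prodDom]
  rw [Measure.prod_prod]
  rw [Measure.restrict_apply (MeasurableSet.compl fundDom_measurableSet)]
  simp

lemma integrable_prod_dom {K : ℝ} (F : E × E → ℝ) (hF : Continuous F)
    (h0 : ∀ (x ξ : E), K ≤ ‖ξ‖ → F (x, ξ) = 0) : Integrable F (prodDom d) := by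
  set K' : ℝ := max K 0 with hK'
  have hK'0 : 0 ≤ K' := le_max_right _ _
  set C : Set (E × E) := Metric.closedBall 0 (Real.sqrt d) ×ˢ Metric.closedBall 0 K' with hC
  have hCc : IsCompact C := (isCompact_closedBall _ _).prod (isCompact_closedBall _ _)
  obtain ⟨M, hM⟩ := hCc.exists_bound_of_continuousOn hF.continuousOn
  have hM0 : 0 ≤ M := by
    have := hM (0, 0) (by
      constructor <;> simp [Real.sqrt_nonneg, hK'0])
    exact le_trans (norm_nonneg _) this
  set bound : E × E → ℝ :=
    (Set.univ ×ˢ Metric.closedBall (0:E) K').indicator (fun _ => M) with hbound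
  have hbint : Integrable bound (prodDom d) := by
    rw [hbound, integrable_indicator_iff (MeasurableSet.univ.prod measurableSet_closedBall)]
    apply (integrableOn_const_iff (C := M)).mpr
    right
    simp only [prodDom]
    rw [Measure.prod_prod]
    apply ENNReal.mul_lt_top
    · rw [Measure.restrict_apply MeasurableSet.univ, Set.univ_inter]
      exact lt_of_le_of_lt (measure_mono fundDom_subset_ball)
        (MeasureTheory.measure_closedBall_lt_top)
    · exact MeasureTheory.measure_closedBall_lt_top
  apply Integrable.mono' hbint hF.aestronglyMeasurable
  filter_upwards [ae_fst_mem_fundDom] with q hq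
  by_cases hξ : ‖q.2‖ ≤ K'
  · have hqC : q ∈ C := by
      constructor
      · simpa [Metric.mem_closedBall, dist_zero_right] using
          (Metric.mem_closedBall.mp (fundDom_subset_ball hq))
      · simpa [Metric.mem_closedBall, dist_zero_right] using hξ
    have := hM q hqC
    have hqin : q ∈ Set.univ ×ˢ Metric.closedBall (0:E) K' := by
      constructor
      · trivial
      · simpa [Metric.mem_closedBall, dist_zero_right] using hξ
    rw [hbound, Set.indicator_of_mem hqin]
    exact this
  · push_neg at hξ
    have : F q = 0 := by
      have : F (q.1, q.2) = 0 := h0 q.1 q.2 (le_trans (le_max_left _ _) hξ.le)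
      simpa using this
    rw [this]
    simp only [norm_zero, hbound]
    exact Set.indicator_nonneg (fun _ _ => hM0) q

lemma partial_fderiv_fst (W : E × E → ℝ) (hW : Differentiable ℝ W) (x ξ w : E) :
    fderiv ℝ (fun y => W (y, ξ)) x w = fderiv ℝ W (x, ξ) (w, 0) := by
  have h1 : HasFDerivAt (fun y : E => (y, ξ)) (ContinuousLinearMap.inl ℝ E E) x :=
    hasFDerivAt_prodMk_left x ξ
  have h2 := fderiv_comp x (hW (x, ξ)) h1.differentiableAt
  rw [h1.fderiv] at h2
  have : (fun y => W (y, ξ)) = W ∘ (fun y : E => (y, ξ)) := rfl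
  rw [this, h2]
  rfl

lemma partial_fderiv_snd (W : E × E → ℝ) (hW : Differentiable ℝ W) (x ξ w : E) :
    fderiv ℝ (fun η => W (x, η)) ξ w = fderiv ℝ W (x, ξ) (0, w) := by
  have h1 : HasFDerivAt (fun η : E => (x, η)) (ContinuousLinearMap.inr ℝ E E) ξ :=
    hasFDerivAt_prodMk_right x ξ
  have h2 := fderiv_comp ξ (hW (x, ξ)) h1.differentiableAt
  rw [h1.fderiv] at h2
  have : (fun η => W (x, η)) = W ∘ (fun η : E => (x, η)) := rfl
  rw [this, h2]
  rfl

lemma prod_integral_partial_x_zero {K : ℝ} (W : E → E → ℝ)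
    (hW : ContDiff ℝ 1 (fun q : E × E => W q.1 q.2))
    (hper : ∀ ξ, ZPeriodic (fun x => W x ξ))
    (hsupp : ∀ (x ξ : E), K ≤ ‖ξ‖ → W x ξ = 0) :
    ∫ q : E × E, fderiv ℝ (fun y => W y q.2) q.1 q.2 ∂(prodDom d) = 0 := by
  have hWd : Differentiable ℝ (fun q : E × E => W q.1 q.2) := hW.differentiable one_ne_zero
  have hrw : ∀ q : E × E, fderiv ℝ (fun y => W y q.2) q.1 q.2
      = fderiv ℝ (fun q : E × E => W q.1 q.2) q (q.2, 0) := by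
    intro q
    exact partial_fderiv_fst (fun q : E × E => W q.1 q.2) hWd q.1 q.2 q.2
  have hcont : Continuous fun q : E × E => fderiv ℝ (fun q : E × E => W q.1 q.2) q (q.2, 0) :=
    (hW.continuous_fderiv one_ne_zero).clm_apply (continuous_snd.prodMk continuous_const)
  have h0 : ∀ (x ξ : E), K ≤ ‖ξ‖ →
      fderiv ℝ (fun q : E × E => W q.1 q.2) (x, ξ) (ξ, 0) = 0 := by
    intro x ξ hξ
    have hzero : (fun y => W y ξ) = fun _ => (0:ℝ) := funext fun y => hsupp y ξ hξ
    have := partial_fderiv_fst (fun q : E × E => W q.1 q.2) hWd x ξ ξ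
    rw [← this, hzero]
    simp
  have hInt : Integrable (fun q : E × E =>
      fderiv ℝ (fun q : E × E => W q.1 q.2) q (q.2, 0)) (prodDom d) :=
    integrable_prod_dom _ hcont h0
  calc (∫ q : E × E, fderiv ℝ (fun y => W y q.2) q.1 q.2 ∂(prodDom d))
      = ∫ q : E × E, fderiv ℝ (fun q : E × E => W q.1 q.2) q (q.2, 0) ∂(prodDom d) :=
        integral_congr_ae (Filter.Eventually.of_forall hrw)
    _ = ∫ x in fundDom d, ∫ ξ,
          fderiv ℝ (fun q : E × E => W q.1 q.2) (x, ξ) (ξ, 0) ∂volume ∂volume :=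
        MeasureTheory.integral_prod _ hInt
    _ = ∫ ξ, ∫ x in fundDom d,
          fderiv ℝ (fun q : E × E => W q.1 q.2) (x, ξ) (ξ, 0) ∂volume ∂volume := by
        apply MeasureTheory.integral_integral_swap
        exact hInt
    _ = ∫ ξ : E, (0:ℝ) ∂volume := by
        apply integral_congr_ae
        filter_upwards with ξ
        have hWξ : ContDiff ℝ 1 (fun y : E => W y ξ) :=
          hW.comp (contDiff_id.prodMk contDiff_const)
        have key := periodic_setIntegral_fderiv_zero (fun y => W y ξ) hWξ (hper ξ) ξ
        rw [← key]
        apply setIntegral_congr_ae fundDom_measurableSet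
        filter_upwards with x _
        exact (partial_fderiv_fst (fun q : E × E => W q.1 q.2) hWd x ξ ξ).symm
    _ = 0 := integral_zero _ _

lemma prod_integral_partial_xi_zero {K : ℝ} (W : E → E → ℝ) (c : E → E)
    (hW : ContDiff ℝ 1 (fun q : E × E => W q.1 q.2)) (hc : Continuous c)
    (hsupp : ∀ (x ξ : E), K ≤ ‖ξ‖ → W x ξ = 0) :
    ∫ q : E × E, fderiv ℝ (fun η => W q.1 η) q.2 (c q.1) ∂(prodDom d) = 0 := by
  have hWd : Differentiable ℝ (fun q : E × E => W q.1 q.2) := hW.differentiable one_ne_zero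
  have hrw : ∀ q : E × E, fderiv ℝ (fun η => W q.1 η) q.2 (c q.1)
      = fderiv ℝ (fun q : E × E => W q.1 q.2) q (0, c q.1) := fun q =>
    partial_fderiv_snd (fun q : E × E => W q.1 q.2) hWd q.1 q.2 (c q.1)
  have hcont : Continuous fun q : E × E =>
      fderiv ℝ (fun q : E × E => W q.1 q.2) q (0, c q.1) :=
    (hW.continuous_fderiv one_ne_zero).clm_apply
      (continuous_const.prodMk (hc.comp continuous_fst))
  have h0 : ∀ (x ξ : E), K + 1 ≤ ‖ξ‖ →
      fderiv ℝ (fun q : E × E => W q.1 q.2) (x, ξ) (0, c x) = 0 := by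
    intro x ξ hξ
    have hop : IsOpen {q : E × E | K < ‖q.2‖} :=
      isOpen_lt continuous_const (continuous_norm.comp continuous_snd)
    have hmem : (x, ξ) ∈ {q : E × E | K < ‖q.2‖} := by
      simp only [Set.mem_setOf_eq]
      linarith
    have hev : (fun q : E × E => W q.1 q.2) =ᶠ[nhds (x, ξ)] (fun _ => (0:ℝ)) := by
      filter_upwards [hop.mem_nhds hmem] with q hq
      exact hsupp q.1 q.2 (le_of_lt hq)
    rw [hev.fderiv_eq]
    simp
  have hInt : Integrable (fun q : E × E =>
      fderiv ℝ (fun q : E × E => W q.1 q.2) q (0, c q.1)) (prodDom d) :=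
    integrable_prod_dom _ hcont h0
  calc (∫ q : E × E, fderiv ℝ (fun η => W q.1 η) q.2 (c q.1) ∂(prodDom d))
      = ∫ q : E × E, fderiv ℝ (fun q : E × E => W q.1 q.2) q (0, c q.1) ∂(prodDom d) :=
        integral_congr_ae (Filter.Eventually.of_forall hrw)
    _ = ∫ x in fundDom d, ∫ ξ,
          fderiv ℝ (fun q : E × E => W q.1 q.2) (x, ξ) (0, c x) ∂volume ∂volume :=
        MeasureTheory.integral_prod _ hInt
    _ = ∫ x in fundDom d, (0:ℝ) ∂volume := by
        apply integral_congr_ae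
        filter_upwards with x
        have hWx : ContDiff ℝ 1 (fun η : E => W x η) :=
          hW.comp (contDiff_const.prodMk contDiff_id)
        have hcs : HasCompactSupport (fun η : E => W x η) := by
          apply HasCompactSupport.intro (isCompact_closedBall (0:E) (max K 0))
          intro ξ hξ
          apply hsupp
          simp only [Metric.mem_closedBall, dist_zero_right, not_le] at hξ
          exact le_trans (le_max_left _ _) hξ.le
        have key := compactsupport_integral_fderiv_zero (fun η => W x η) hWx hcs (c x)
        rw [← key]
        apply integral_congr_ae
        filter_upwards with ξ
        exact (partial_fderiv_snd (fun q : E × E => W q.1 q.2) hWd x ξ (c x)).symm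
    _ = 0 := integral_zero _ _

end Part3
section Main
open MeasureTheory Real RealInnerProductSpace
variable {d : ℕ}

local notation "E" => EuclideanSpace ℝ (Fin d)

lemma grad_inner_eq (h : E → ℝ) (x w : E) :
    ⟪gradient h x, w⟫ = fderiv ℝ h x w := by
  rw [gradient]
  exact InnerProductSpace.toDual_symm_apply

lemma grad_partial_cont (P : ℝ × E → ℝ) (hP : ContDiff ℝ 1 P) (t : ℝ) :
    Continuous fun x : E => gradient (fun y => P (t, y)) x := by
  have heq : ∀ x : E, gradient (fun y => P (t, y)) x
      = (InnerProductSpace.toDual ℝ _).symm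
          ((fderiv ℝ P (t, x)).comp (ContinuousLinearMap.inr ℝ ℝ _)) := by
    intro x
    rw [gradient]
    congr 1
    have h1 : HasFDerivAt (fun y : E => ((t, y) : ℝ × E))
        (ContinuousLinearMap.inr ℝ ℝ _) x := hasFDerivAt_prodMk_right t x
    have h2 := fderiv_comp x (hP.differentiable one_ne_zero (t, x)) h1.differentiableAt
    rw [h1.fderiv] at h2
    exact h2
  rw [show (fun x : E => gradient (fun y => P (t, y)) x) = _ from funext heq]
  exact (LinearIsometryEquiv.continuous _).comp
    (((hP.continuous_fderiv one_ne_zero).comp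
      (continuous_const.prodMk continuous_id)).clm_comp continuous_const)

lemma partial_fderiv_v (V : ℝ × E → E) (hV : Differentiable ℝ V) (t : ℝ) (x : E) :
    fderiv ℝ (fun y => V (t, y)) x = (fderiv ℝ V (t, x)).comp (ContinuousLinearMap.inr ℝ ℝ E) := by
  have h1 : HasFDerivAt (fun y : E => ((t, y) : ℝ × E))
      (ContinuousLinearMap.inr ℝ ℝ E) x := hasFDerivAt_prodMk_right t x
  have h2 := fderiv_comp x (hV (t, x)) h1.differentiableAt
  rw [h1.fderiv] at h2
  exact h2

set_option maxHeartbeats 2000000 in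
lemma main_aux (ε : ℝ) (hε : 0 < ε) (v : ℝ → E → E) (p : ℝ → E → ℝ)
    (hv : ContDiff ℝ 1 fun q : ℝ × E => v q.1 q.2)
    (hp : ContDiff ℝ 1 fun q : ℝ × E => p q.1 q.2)
    (hvper : ∀ t, ZPeriodic (v t))
    (hEuler : ∀ t x, deriv (fun s => v s x) t + fderiv ℝ (fun y => v t y) x (v t x)
      = -gradient (fun y => p t y) x)
    (f : ℝ → E → E → ℝ) (φt : ℝ → E → ℝ)
    (hf : ContDiff ℝ 1 fun q : ℝ × E × E => f q.1 q.2.1 q.2.2)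
    (hφ : ContDiff ℝ 1 fun q : ℝ × E => φt q.1 q.2)
    (hfper : ∀ t ξ, ZPeriodic fun x => f t x ξ)
    (hsupp : ∃ K : ℝ, ∀ t x ξ, K ≤ ‖ξ‖ → f t x ξ = 0)
    (hPDE : ∀ t x ξ,
      deriv (fun s => f s x ξ) t + ⟪ξ, gradient (fun y => f t y ξ) x⟫
        - (1/ε) * ⟪gradient (fun y => φt t y) x, gradient (fun η => f t x η) ξ⟫ = 0)
    (hEnergy : ∀ t : ℝ,
      (1/2) * (∫ x in fundDom d, ∫ ξ, f t x ξ * ‖ξ‖ ^ 2)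
          + (1/2) * (∫ x in fundDom d, (∫ ξ, f t x ξ) * ‖gradient (fun y => φt t y) x‖ ^ 2)
        = (1/2) * (∫ x in fundDom d, ∫ ξ, f 0 x ξ * ‖ξ‖ ^ 2)
          + (1/2) * (∫ x in fundDom d, (∫ ξ, f 0 x ξ) * ‖gradient (fun y => φt 0 y) x‖ ^ 2))
    (t : ℝ) :
    HasDerivAt (fun s =>
        (1/2) * (∫ x in fundDom d, ∫ ξ, f s x ξ * ‖ξ - v s x‖ ^ 2)
          + (1/2) * (∫ x in fundDom d, (∫ ξ, f s x ξ) * ‖gradient (fun y => φt s y) x‖ ^ 2))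
      (-(∫ x in fundDom d, ∫ ξ, f t x ξ *
            ⟪ξ - v t x, fderiv ℝ (fun y => v t y) x (ξ - v t x)⟫)
        + (1/ε) * (∫ x in fundDom d, ∫ ξ, f t x ξ *
            ⟪v t x, gradient (fun y => φt t y) x⟫)
        - ∫ x in fundDom d, ∫ ξ, f t x ξ *
            ⟪v t x - ξ, gradient (fun y => p t y) x⟫) t := by
  classical
  obtain ⟨K, hK⟩ := hsupp
  -- notation
  set Ff : ℝ × E × E → ℝ := fun q => f q.1 q.2.1 q.2.2 with hFf
  set Vf : ℝ × E → E := fun q => v q.1 q.2 with hVf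
  have hfd : Differentiable ℝ Ff := hf.differentiable one_ne_zero
  have hvd : Differentiable ℝ Vf := hv.differentiable one_ne_zero
  -- modulating weight
  set g : ℝ → E → E → ℝ := fun s x ξ => (1/2) * ⟪v s x, v s x⟫ - ⟪ξ, v s x⟫ with hgdef
  have hvq : ContDiff ℝ 1 fun q : ℝ × E × E => v q.1 q.2.1 :=
    hv.comp (contDiff_fst.prodMk (contDiff_fst.comp contDiff_snd))
  have hξq : ContDiff ℝ 1 fun q : ℝ × E × E => q.2.2 := contDiff_snd.comp contDiff_snd
  have hgC : ContDiff ℝ 1 fun q : ℝ × E × E => g q.1 q.2.1 q.2.2 := by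
    apply ContDiff.sub
    · exact contDiff_const.mul (hvq.inner ℝ hvq)
    · exact hξq.inner ℝ hvq
  set Φ : ℝ → E × E → ℝ := fun s q => f s q.1 q.2 * g s q.1 q.2 with hΦdef
  have hΦC : ContDiff ℝ 1 fun z : ℝ × E × E => Ff z * g z.1 z.2.1 z.2.2 := hf.mul hgC
  -- time partial derivatives
  have hfx : ∀ (s : ℝ) (x ξ : E), HasDerivAt (fun r => f r x ξ)
      (fderiv ℝ Ff (s, x, ξ) (1, 0, 0)) s := by
    intro s x ξ
    have h1 : HasDerivAt (fun r : ℝ => ((r, x, ξ) : ℝ × E × E)) (1, 0, 0) s :=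
      (hasDerivAt_id s).prodMk ((hasDerivAt_const s x).prodMk (hasDerivAt_const s ξ))
    exact (hfd (s, x, ξ)).hasFDerivAt.comp_hasDerivAt s h1
  have hvt : ∀ (s : ℝ) (x : E), HasDerivAt (fun r => v r x)
      (fderiv ℝ Vf (s, x) (1, 0)) s := by
    intro s x
    have h1 : HasDerivAt (fun r : ℝ => ((r, x) : ℝ × E)) (1, 0) s :=
      (hasDerivAt_id s).prodMk (hasDerivAt_const s x)
    exact (hvd (s, x)).hasFDerivAt.comp_hasDerivAt s h1
  set Φ' : ℝ → E × E → ℝ := fun s q =>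
    fderiv ℝ Ff (s, q.1, q.2) (1, 0, 0) * g s q.1 q.2
      + f s q.1 q.2 * ⟪v s q.1 - q.2, fderiv ℝ Vf (s, q.1) (1, 0)⟫ with hΦ'def
  have hΦderiv : ∀ (s : ℝ) (q : E × E), HasDerivAt (fun r => Φ r q) (Φ' s q) s := by
    intro s q
    have hd1 := hfx s q.1 q.2
    have hd2 := hvt s q.1
    have hg1 : HasDerivAt (fun r => ⟪v r q.1, v r q.1⟫)
        (⟪v s q.1, fderiv ℝ Vf (s, q.1) (1, 0)⟫ + ⟪fderiv ℝ Vf (s, q.1) (1, 0), v s q.1⟫) s :=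
      hd2.inner ℝ hd2
    have hg2 : HasDerivAt (fun r => ⟪q.2, v r q.1⟫)
        (⟪q.2, fderiv ℝ Vf (s, q.1) (1, 0)⟫ + ⟪(0:E), v s q.1⟫) s :=
      (hasDerivAt_const s q.2).inner ℝ hd2
    have hg3 := (hg1.const_mul (1/2 : ℝ)).sub hg2
    have hvalg : (1/2 : ℝ) * (⟪v s q.1, fderiv ℝ Vf (s, q.1) (1, 0)⟫
          + ⟪fderiv ℝ Vf (s, q.1) (1, 0), v s q.1⟫)
        - (⟪q.2, fderiv ℝ Vf (s, q.1) (1, 0)⟫ + ⟪(0:E), v s q.1⟫)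
        = ⟪v s q.1 - q.2, fderiv ℝ Vf (s, q.1) (1, 0)⟫ := by
      rw [inner_sub_left, inner_zero_left,
        real_inner_comm (fderiv ℝ Vf (s, q.1) (1, 0)) (v s q.1)]
      ring
    have hgd : HasDerivAt (fun r => g r q.1 q.2)
        ⟪v s q.1 - q.2, fderiv ℝ Vf (s, q.1) (1, 0)⟫ s := hvalg ▸ hg3
    exact hd1.mul hgd
  have hrearr : Continuous fun z : ℝ × (E × E) => ((z.1, z.2.1, z.2.2) : ℝ × E × E) :=
    continuous_fst.prodMk ((continuous_fst.comp continuous_snd).prodMk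
      (continuous_snd.comp continuous_snd))
  have hrearr2 : Continuous fun z : ℝ × (E × E) => ((z.1, z.2.1) : ℝ × E) :=
    continuous_fst.prodMk (continuous_fst.comp continuous_snd)
  have hΦ'contAll : Continuous fun z : ℝ × (E × E) => Φ' z.1 z.2 := by
    have c1 : Continuous fun z : ℝ × (E × E) => fderiv ℝ Ff (z.1, z.2.1, z.2.2) (1, 0, 0) :=
      ((hf.continuous_fderiv one_ne_zero).comp hrearr).clm_apply continuous_const
    have c2 : Continuous fun z : ℝ × (E × E) => g z.1 z.2.1 z.2.2 :=
      hgC.continuous.comp hrearr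
    have c3 : Continuous fun z : ℝ × (E × E) => f z.1 z.2.1 z.2.2 :=
      hf.continuous.comp hrearr
    have c4 : Continuous fun z : ℝ × (E × E) =>
        ⟪v z.1 z.2.1 - z.2.2, fderiv ℝ Vf (z.1, z.2.1) (1, 0)⟫ :=
      Continuous.inner
        ((hv.continuous.comp hrearr2).sub (continuous_snd.comp continuous_snd))
        (((hv.continuous_fderiv one_ne_zero).comp hrearr2).clm_apply continuous_const)
    exact (c1.mul c2).add (c3.mul c4)
  have hΦcont : ∀ s : ℝ, Continuous fun q : E × E => Φ s q := by
    intro s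
    exact (hΦC.continuous).comp (continuous_const.prodMk continuous_id)
  have hΦzero : ∀ (s : ℝ) (x ξ : E), K ≤ ‖ξ‖ → Φ s (x, ξ) = 0 := by
    intro s x ξ h
    show f s x ξ * g s x ξ = 0
    rw [hK s x ξ h, zero_mul]
  have hKK : K ≤ max K 0 := le_max_left _ _
  have hΦ'zero : ∀ (s : ℝ) (q : E × E), max K 0 + 1 ≤ ‖q.2‖ → Φ' s q = 0 := by
    intro s q h
    have h1 : f s q.1 q.2 = 0 := hK _ _ _ (by linarith)
    have h2 : fderiv ℝ Ff (s, q.1, q.2) = 0 := by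
      have hop : IsOpen {z : ℝ × E × E | K < ‖z.2.2‖} :=
        isOpen_lt continuous_const (continuous_norm.comp (continuous_snd.comp continuous_snd))
      have hmem : ((s, q.1, q.2) : ℝ × E × E) ∈ {z : ℝ × E × E | K < ‖z.2.2‖} := by
        simp only [Set.mem_setOf_eq]
        show K < ‖q.2‖
        linarith
      have hev : Ff =ᶠ[nhds ((s, q.1, q.2) : ℝ × E × E)] (fun _ => (0:ℝ)) := by
        filter_upwards [hop.mem_nhds hmem] with z hz
        exact hK z.1 z.2.1 z.2.2 (le_of_lt hz)
      rw [hev.fderiv_eq]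
      simp
    show fderiv ℝ Ff (s, q.1, q.2) (1, 0, 0) * g s q.1 q.2
        + f s q.1 q.2 * ⟪v s q.1 - q.2, fderiv ℝ Vf (s, q.1) (1, 0)⟫ = 0
    rw [h1, h2]
    simp
  -- step 1 : derivative of the product integral via dominated convergence
  have hDCT : HasDerivAt (fun s => ∫ q, Φ s q ∂(prodDom d)) (∫ q, Φ' t q ∂(prodDom d)) t := by
    set K1 : ℝ := max K 0 + 1 with hK1
    have hK10 : 0 ≤ K1 := by
      have := le_max_right K 0
      linarith
    set Cpt : Set (ℝ × (E × E)) :=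
      Set.Icc (t-1) (t+1) ×ˢ (Metric.closedBall 0 (Real.sqrt d) ×ˢ Metric.closedBall 0 K1)
      with hCpt
    have hCc : IsCompact Cpt := isCompact_Icc.prod
      ((isCompact_closedBall _ _).prod (isCompact_closedBall _ _))
    obtain ⟨M, hM⟩ := hCc.exists_bound_of_continuousOn hΦ'contAll.continuousOn
    have htmem : t ∈ Set.Icc (t-1) (t+1) := by constructor <;> linarith
    have h00 : ((0 : E), (0 : E)) ∈
        Metric.closedBall (0:E) (Real.sqrt d) ×ˢ Metric.closedBall (0:E) K1 := by
      constructor <;> simp [Real.sqrt_nonneg, hK10]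
    have hM0 : 0 ≤ M := le_trans (norm_nonneg _) (hM (t, (0, 0)) ⟨htmem, h00⟩)
    set bound : E × E → ℝ := (Set.univ ×ˢ Metric.closedBall (0:E) K1).indicator (fun _ => M)
      with hbd
    have hbint : Integrable bound (prodDom d) := by
      rw [hbd, integrable_indicator_iff (MeasurableSet.univ.prod measurableSet_closedBall)]
      apply (integrableOn_const_iff (C := M)).mpr
      right
      simp only [prodDom]
      rw [Measure.prod_prod]
      apply ENNReal.mul_lt_top
      · rw [Measure.restrict_apply MeasurableSet.univ, Set.univ_inter]
        exact lt_of_le_of_lt (measure_mono fundDom_subset_ball)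
          MeasureTheory.measure_closedBall_lt_top
      · exact MeasureTheory.measure_closedBall_lt_top
    have haebd : ∀ᵐ q ∂(prodDom d), ∀ s ∈ Metric.ball t 1, ‖Φ' s q‖ ≤ bound q := by
      filter_upwards [ae_fst_mem_fundDom] with q hq
      intro s hs
      rw [Metric.mem_ball, Real.dist_eq] at hs
      obtain ⟨hs1, hs2⟩ := abs_sub_lt_iff.mp hs
      by_cases hξ : ‖q.2‖ ≤ K1
      · have hmem : ((s, q) : ℝ × (E × E)) ∈ Cpt := by
          refine ⟨⟨by linarith, by linarith⟩, ?_, ?_⟩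
          · simpa [Metric.mem_closedBall, dist_zero_right] using
              Metric.mem_closedBall.mp (fundDom_subset_ball hq)
          · simpa [Metric.mem_closedBall, dist_zero_right] using hξ
        have hqin : q ∈ Set.univ ×ˢ Metric.closedBall (0:E) K1 :=
          ⟨trivial, by simpa [Metric.mem_closedBall, dist_zero_right] using hξ⟩
        calc ‖Φ' s q‖ ≤ M := hM (s, q) hmem
          _ = bound q := by rw [hbd, Set.indicator_of_mem hqin]
      · push_neg at hξ
        rw [hΦ'zero s q (le_of_lt hξ)]
        simp only [norm_zero, hbd]
        exact Set.indicator_nonneg (fun _ _ => hM0) q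
    exact (hasDerivAt_integral_of_dominated_loc_of_deriv_le (Metric.ball_mem_nhds t zero_lt_one)
      (Filter.Eventually.of_forall fun s => (hΦcont s).aestronglyMeasurable)
      (integrable_prod_dom (K := K) _ (hΦcont t) (hΦzero t))
      ((hΦ'contAll.comp (continuous_const.prodMk continuous_id)).aestronglyMeasurable)
      haebd hbint
      (Filter.Eventually.of_forall fun q s _ => hΦderiv s q)).2
  -- step 2 : identification of the modulated energy with `const + ∫ Φ`
  set C₀ : ℝ := (1/2) * (∫ x in fundDom d, ∫ ξ, f 0 x ξ * ‖ξ‖ ^ 2)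
      + (1/2) * (∫ x in fundDom d, (∫ ξ, f 0 x ξ) * ‖gradient (fun y => φt 0 y) x‖ ^ 2) with hC₀
  have hfun : ∀ s : ℝ,
      (1/2) * (∫ x in fundDom d, ∫ ξ, f s x ξ * ‖ξ - v s x‖ ^ 2)
          + (1/2) * (∫ x in fundDom d, (∫ ξ, f s x ξ) * ‖gradient (fun y => φt s y) x‖ ^ 2)
        = C₀ + ∫ q, Φ s q ∂(prodDom d) := by
    intro s
    have hcf : Continuous fun q : E × E => f s q.1 q.2 :=
      hf.continuous.comp (continuous_const.prodMk continuous_id)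
    have hcv : Continuous fun q : E × E => v s q.1 :=
      hv.continuous.comp (continuous_const.prodMk continuous_fst)
    have hI1 : Integrable (fun q : E × E => f s q.1 q.2 * ‖q.2 - v s q.1‖ ^ 2) (prodDom d) :=
      integrable_prod_dom (K := K) _ (hcf.mul ((continuous_snd.sub hcv).norm.pow 2))
        (fun x ξ h => by
          show f s x ξ * _ = 0
          rw [hK s x ξ h, zero_mul])
    have hI2 : Integrable (fun q : E × E => f s q.1 q.2 * ‖q.2‖ ^ 2) (prodDom d) :=
      integrable_prod_dom (K := K) _ (hcf.mul (continuous_snd.norm.pow 2))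
        (fun x ξ h => by
          show f s x ξ * _ = 0
          rw [hK s x ξ h, zero_mul])
    have hI3 : Integrable (Φ s) (prodDom d) :=
      integrable_prod_dom (K := K) _ (hΦcont s) (hΦzero s)
    have e1 : (∫ x in fundDom d, ∫ ξ, f s x ξ * ‖ξ - v s x‖ ^ 2)
        = ∫ q, f s q.1 q.2 * ‖q.2 - v s q.1‖ ^ 2 ∂(prodDom d) :=
      (MeasureTheory.integral_prod _ hI1).symm
    have e2 : (∫ x in fundDom d, ∫ ξ, f s x ξ * ‖ξ‖ ^ 2)
        = ∫ q, f s q.1 q.2 * ‖q.2‖ ^ 2 ∂(prodDom d) :=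
      (MeasureTheory.integral_prod _ hI2).symm
    have epoint : ∀ q : E × E,
        f s q.1 q.2 * ‖q.2 - v s q.1‖ ^ 2 = f s q.1 q.2 * ‖q.2‖ ^ 2 + 2 * Φ s q := by
      intro q
      have hns := norm_sub_sq_real q.2 (v s q.1)
      have hin : ⟪v s q.1, v s q.1⟫ = ‖v s q.1‖ ^ 2 := real_inner_self_eq_norm_sq _
      show f s q.1 q.2 * ‖q.2 - v s q.1‖ ^ 2
          = f s q.1 q.2 * ‖q.2‖ ^ 2
            + 2 * (f s q.1 q.2 * ((1/2) * ⟪v s q.1, v s q.1⟫ - ⟪q.2, v s q.1⟫))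
      rw [hns, hin]
      ring
    have e3 : (∫ q, f s q.1 q.2 * ‖q.2 - v s q.1‖ ^ 2 ∂(prodDom d))
        = (∫ q, f s q.1 q.2 * ‖q.2‖ ^ 2 ∂(prodDom d)) + 2 * ∫ q, Φ s q ∂(prodDom d) := by
      rw [integral_congr_ae (Filter.Eventually.of_forall epoint),
        integral_add hI2 (hI3.const_mul 2), integral_const_mul]
    have hE := hEnergy s
    rw [e1, e3, ← e2]
    rw [hC₀]
    linarith
  -- step 3 : identification of the derivative value
  have hval : (∫ q, Φ' t q ∂(prodDom d))
      = -(∫ x in fundDom d, ∫ ξ, f t x ξ *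
            ⟪ξ - v t x, fderiv ℝ (fun y => v t y) x (ξ - v t x)⟫)
        + (1/ε) * (∫ x in fundDom d, ∫ ξ, f t x ξ *
            ⟪v t x, gradient (fun y => φt t y) x⟫)
        - ∫ x in fundDom d, ∫ ξ, f t x ξ *
            ⟪v t x - ξ, gradient (fun y => p t y) x⟫ := by
    -- differentiability of partial maps
    have hvdx : ∀ x : E, DifferentiableAt ℝ (fun y => v t y) x := fun x =>
      (hvd (t, x)).comp x ((differentiableAt_const t).prodMk differentiableAt_id)
    have hfdx : ∀ (x ξ : E), DifferentiableAt ℝ (fun y => f t y ξ) x := fun x ξ =>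
      (hfd (t, x, ξ)).comp (f := fun y : E => ((t, y, ξ) : ℝ × E × E)) x
        ((differentiableAt_const t).prodMk (differentiableAt_id.prodMk (differentiableAt_const ξ)))
    have hfdξ : ∀ (x ξ : E), DifferentiableAt ℝ (fun η => f t x η) ξ := fun x ξ =>
      (hfd (t, x, ξ)).comp (f := fun η : E => ((t, x, η) : ℝ × E × E)) ξ
        ((differentiableAt_const t).prodMk ((differentiableAt_const x).prodMk differentiableAt_id))
    have hgdx : ∀ (x ξ : E), DifferentiableAt ℝ (fun y => g t y ξ) x := fun x ξ =>
      (((hvdx x).inner ℝ (hvdx x)).const_mul _).sub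
        ((differentiableAt_const ξ).inner ℝ (hvdx x))
    have hgdξ : ∀ (x ξ : E), DifferentiableAt ℝ (fun η => g t x η) ξ := fun x ξ =>
      (differentiableAt_const _).sub
        (differentiableAt_fun_id.inner ℝ (differentiableAt_const (v t x)))
    -- continuity facts
    have hΓcont : Continuous fun x : E => fderiv ℝ (fun y => v t y) x := by
      rw [show (fun x : E => fderiv ℝ (fun y => v t y) x)
          = fun x : E => (fderiv ℝ Vf (t, x)).comp (ContinuousLinearMap.inr ℝ ℝ E)
        from funext fun x => partial_fderiv_v Vf hvd t x]
      exact ((hv.continuous_fderiv one_ne_zero).comp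
        (continuous_const.prodMk continuous_id)).clm_comp continuous_const
    have hgradφ_cont : Continuous fun x : E => gradient (fun y => φt t y) x :=
      grad_partial_cont (fun q : ℝ × E => φt q.1 q.2) hφ t
    have hgradp_cont : Continuous fun x : E => gradient (fun y => p t y) x :=
      grad_partial_cont (fun q : ℝ × E => p q.1 q.2) hp t
    have hcf_t : Continuous fun q : E × E => f t q.1 q.2 :=
      hf.continuous.comp (continuous_const.prodMk continuous_id)
    have hcv_t : Continuous fun q : E × E => v t q.1 :=
      hv.continuous.comp (continuous_const.prodMk continuous_fst)
    -- integrability of the three target integrands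
    have hA1int : Integrable (fun q : E × E => f t q.1 q.2 *
        ⟪q.2 - v t q.1, fderiv ℝ (fun y => v t y) q.1 (q.2 - v t q.1)⟫) (prodDom d) :=
      integrable_prod_dom (K := K) _
        (hcf_t.mul (Continuous.inner (continuous_snd.sub hcv_t)
          ((hΓcont.comp continuous_fst).clm_apply (continuous_snd.sub hcv_t))))
        (fun x ξ h => by
          show f t x ξ * _ = 0
          rw [hK t x ξ h, zero_mul])
    have hA2int : Integrable (fun q : E × E => f t q.1 q.2 *
        ⟪v t q.1, gradient (fun y => φt t y) q.1⟫) (prodDom d) :=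
      integrable_prod_dom (K := K) _
        (hcf_t.mul (Continuous.inner hcv_t (hgradφ_cont.comp continuous_fst)))
        (fun x ξ h => by
          show f t x ξ * _ = 0
          rw [hK t x ξ h, zero_mul])
    have hA3int : Integrable (fun q : E × E => f t q.1 q.2 *
        ⟪v t q.1 - q.2, gradient (fun y => p t y) q.1⟫) (prodDom d) :=
      integrable_prod_dom (K := K) _
        (hcf_t.mul (Continuous.inner (hcv_t.sub continuous_snd)
          (hgradp_cont.comp continuous_fst)))
        (fun x ξ h => by
          show f t x ξ * _ = 0
          rw [hK t x ξ h, zero_mul])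
    -- the function W and integration by parts
    have hWC : ContDiff ℝ 1 fun q : E × E => f t q.1 q.2 * g t q.1 q.2 :=
      hΦC.comp (contDiff_const.prodMk contDiff_id)
    have hWd : Differentiable ℝ fun q : E × E => f t q.1 q.2 * g t q.1 q.2 :=
      hWC.differentiable one_ne_zero
    have hWper : ∀ ξ, ZPeriodic fun x : E => f t x ξ * g t x ξ := by
      intro ξ x k
      have h1 : f t (WithLp.toLp 2 (fun i => x i + (k i : ℝ))) ξ = f t x ξ := hfper t ξ x k
      have h2 : v t (WithLp.toLp 2 (fun i => x i + (k i : ℝ))) = v t x := hvper t x k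
      show f t (WithLp.toLp 2 (fun i => x i + (k i : ℝ))) ξ * g t (WithLp.toLp 2 (fun i => x i + (k i : ℝ))) ξ
          = f t x ξ * g t x ξ
      simp only [hgdef]
      rw [h1, h2]
    have hWsupp : ∀ (x ξ : E), K ≤ ‖ξ‖ → f t x ξ * g t x ξ = 0 := fun x ξ h => by
      rw [hK t x ξ h, zero_mul]
    have IBP1 := prod_integral_partial_x_zero (fun x ξ : E => f t x ξ * g t x ξ)
      hWC hWper hWsupp
    have IBP2 := prod_integral_partial_xi_zero (fun x ξ : E => f t x ξ * g t x ξ)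
      (fun x => gradient (fun y => φt t y) x) hWC hgradφ_cont hWsupp
    -- integrability of the two integration-by-parts integrands
    have hJ1eq : ∀ q : E × E, fderiv ℝ (fun y => f t y q.2 * g t y q.2) q.1 q.2
        = fderiv ℝ (fun q : E × E => f t q.1 q.2 * g t q.1 q.2) q (q.2, 0) := fun q =>
      partial_fderiv_fst (fun q : E × E => f t q.1 q.2 * g t q.1 q.2) hWd q.1 q.2 q.2
    have hJ1int : Integrable
        (fun q : E × E => fderiv ℝ (fun y => f t y q.2 * g t y q.2) q.1 q.2) (prodDom d) := by
      apply Integrable.congr (integrable_prod_dom (K := K)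
        (fun q : E × E => fderiv ℝ (fun q : E × E => f t q.1 q.2 * g t q.1 q.2) q (q.2, 0))
        ((hWC.continuous_fderiv one_ne_zero).clm_apply (continuous_snd.prodMk continuous_const))
        ?_)
      · exact Filter.Eventually.of_forall fun q => (hJ1eq q).symm
      · intro x ξ h
        have hz : (fun y => f t y ξ * g t y ξ) = fun _ => (0:ℝ) :=
          funext fun y => hWsupp y ξ h
        show fderiv ℝ (fun q : E × E => f t q.1 q.2 * g t q.1 q.2) (x, ξ) (ξ, 0) = 0
        rw [← partial_fderiv_fst (fun q : E × E => f t q.1 q.2 * g t q.1 q.2) hWd x ξ ξ, hz]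
        simp
    have hJ2eq : ∀ q : E × E,
        fderiv ℝ (fun η => f t q.1 η * g t q.1 η) q.2 (gradient (fun y => φt t y) q.1)
        = fderiv ℝ (fun q : E × E => f t q.1 q.2 * g t q.1 q.2) q
            (0, gradient (fun y => φt t y) q.1) := fun q =>
      partial_fderiv_snd (fun q : E × E => f t q.1 q.2 * g t q.1 q.2) hWd q.1 q.2 _
    have hJ2int : Integrable (fun q : E × E =>
        fderiv ℝ (fun η => f t q.1 η * g t q.1 η) q.2 (gradient (fun y => φt t y) q.1))
        (prodDom d) := by
      apply Integrable.congr (integrable_prod_dom (K := K + 1)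
        (fun q : E × E => fderiv ℝ (fun q : E × E => f t q.1 q.2 * g t q.1 q.2) q
          (0, gradient (fun y => φt t y) q.1))
        ((hWC.continuous_fderiv one_ne_zero).clm_apply
          (continuous_const.prodMk (hgradφ_cont.comp continuous_fst)))
        ?_)
      · exact Filter.Eventually.of_forall fun q => (hJ2eq q).symm
      · intro x ξ h
        have hop : IsOpen {q : E × E | K < ‖q.2‖} :=
          isOpen_lt continuous_const (continuous_norm.comp continuous_snd)
        have hmem : ((x, ξ) : E × E) ∈ {q : E × E | K < ‖q.2‖} := by
          simp only [Set.mem_setOf_eq]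
          linarith
        have hev : (fun q : E × E => f t q.1 q.2 * g t q.1 q.2)
            =ᶠ[nhds ((x, ξ) : E × E)] (fun _ => (0:ℝ)) := by
          filter_upwards [hop.mem_nhds hmem] with q hq
          exact hWsupp q.1 q.2 (le_of_lt hq)
        show fderiv ℝ (fun q : E × E => f t q.1 q.2 * g t q.1 q.2) (x, ξ)
          (0, gradient (fun y => φt t y) x) = 0
        rw [hev.fderiv_eq]
        simp
    -- the pointwise identity
    have hPW : ∀ q : E × E, Φ' t q =
        (-(fderiv ℝ (fun y => f t y q.2 * g t y q.2) q.1 q.2)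
          + (1/ε) * (fderiv ℝ (fun η => f t q.1 η * g t q.1 η) q.2
              (gradient (fun y => φt t y) q.1)))
        + (-(f t q.1 q.2 * ⟪q.2 - v t q.1, fderiv ℝ (fun y => v t y) q.1 (q.2 - v t q.1)⟫)
          + (1/ε) * (f t q.1 q.2 * ⟪v t q.1, gradient (fun y => φt t y) q.1⟫)
          - f t q.1 q.2 * ⟪v t q.1 - q.2, gradient (fun y => p t y) q.1⟫) := by
      rintro ⟨x, ξ⟩
      have hft : fderiv ℝ Ff (t, x, ξ) (1, 0, 0)
          = -(fderiv ℝ (fun y => f t y ξ) x ξ)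
            + (1/ε) * (fderiv ℝ (fun η => f t x η) ξ (gradient (fun y => φt t y) x)) := by
        have h1 := hPDE t x ξ
        rw [(hfx t x ξ).deriv] at h1
        have c1 : ⟪ξ, gradient (fun y => f t y ξ) x⟫ = fderiv ℝ (fun y => f t y ξ) x ξ := by
          rw [real_inner_comm]
          exact grad_inner_eq _ _ _
        have c2 : ⟪gradient (fun y => φt t y) x, gradient (fun η => f t x η) ξ⟫
            = fderiv ℝ (fun η => f t x η) ξ (gradient (fun y => φt t y) x) := by
          rw [real_inner_comm]
          exact grad_inner_eq _ _ _
        rw [c1, c2] at h1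
        linarith
      have hvt_val : fderiv ℝ Vf (t, x) (1, 0)
          = -gradient (fun y => p t y) x - fderiv ℝ (fun y => v t y) x (v t x) := by
        have h2 := hEuler t x
        rw [(hvt t x).deriv] at h2
        exact eq_sub_of_add_eq h2
      have hgfunx : (fun y => g t y ξ)
          = fun y => (1/2) * ⟪v t y, v t y⟫ - ⟪ξ, v t y⟫ := rfl
      have d1 : DifferentiableAt ℝ (fun y => ⟪v t y, v t y⟫) x := (hvdx x).inner ℝ (hvdx x)
      have d2 : DifferentiableAt ℝ (fun y => ⟪ξ, v t y⟫) x :=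
        (differentiableAt_const ξ).inner ℝ (hvdx x)
      have hgx : fderiv ℝ (fun y => g t y ξ) x ξ
          = ⟪v t x - ξ, fderiv ℝ (fun y => v t y) x ξ⟫ := by
        calc fderiv ℝ (fun y => g t y ξ) x ξ
            = fderiv ℝ (fun y => (1/2) * ⟪v t y, v t y⟫ - ⟪ξ, v t y⟫) x ξ := rfl
          _ = fderiv ℝ (fun y => (1/2) * ⟪v t y, v t y⟫) x ξ
              - fderiv ℝ (fun y => ⟪ξ, v t y⟫) x ξ := by
              rw [fderiv_fun_sub (d1.const_mul _) d2]
              rfl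
          _ = (1/2) * (fderiv ℝ (fun y => ⟪v t y, v t y⟫) x ξ)
              - fderiv ℝ (fun y => ⟪ξ, v t y⟫) x ξ := by
              rw [fderiv_const_mul d1]
              rfl
          _ = (1/2) * (⟪v t x, fderiv ℝ (fun y => v t y) x ξ⟫
                + ⟪fderiv ℝ (fun y => v t y) x ξ, v t x⟫)
              - (⟪ξ, fderiv ℝ (fun y => v t y) x ξ⟫
                + ⟪fderiv ℝ (fun _ => ξ) x ξ, v t x⟫) := by
              rw [fderiv_inner_apply (𝕜 := ℝ) (hvdx x) (hvdx x) ξ,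
                fderiv_inner_apply (𝕜 := ℝ) (differentiableAt_const ξ) (hvdx x) ξ]
          _ = ⟪v t x - ξ, fderiv ℝ (fun y => v t y) x ξ⟫ := by
              rw [fderiv_fun_const]
              simp only [Pi.zero_apply, ContinuousLinearMap.zero_apply, inner_zero_left,
                add_zero]
              rw [inner_sub_left]
              have hcomm := real_inner_comm (fderiv ℝ (fun y => v t y) x ξ) (v t x)
              linarith
      have hgfunξ : (fun η => g t x η)
          = fun η => (1/2) * ⟪v t x, v t x⟫ - ⟪η, v t x⟫ := rfl
      have d3 : DifferentiableAt ℝ (fun η : E => ⟪η, v t x⟫) ξ :=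
        differentiableAt_fun_id.inner ℝ (differentiableAt_const (v t x))
      have hgξ : fderiv ℝ (fun η => g t x η) ξ (gradient (fun y => φt t y) x)
          = -⟪gradient (fun y => φt t y) x, v t x⟫ := by
        calc fderiv ℝ (fun η => g t x η) ξ (gradient (fun y => φt t y) x)
            = fderiv ℝ (fun η => (1/2) * ⟪v t x, v t x⟫ - ⟪η, v t x⟫) ξ
                (gradient (fun y => φt t y) x) := rfl
          _ = fderiv ℝ (fun _ : E => (1/2) * ⟪v t x, v t x⟫) ξ (gradient (fun y => φt t y) x)
              - fderiv ℝ (fun η : E => ⟪η, v t x⟫) ξ (gradient (fun y => φt t y) x) := by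
              rw [fderiv_fun_sub (differentiableAt_const _) d3]
              rfl
          _ = -⟪gradient (fun y => φt t y) x, v t x⟫ := by
              rw [fderiv_fun_const]
              rw [fderiv_inner_apply (𝕜 := ℝ) differentiableAt_fun_id
                (differentiableAt_const (v t x)) (gradient (fun y => φt t y) x)]
              rw [fderiv_fun_const, fderiv_id']
              simp only [Pi.zero_apply, ContinuousLinearMap.zero_apply,
                ContinuousLinearMap.coe_id', id_eq, inner_zero_right, zero_add, zero_sub]
      have hJ1x : fderiv ℝ (fun y => f t y ξ * g t y ξ) x ξ
          = f t x ξ * ⟪v t x - ξ, fderiv ℝ (fun y => v t y) x ξ⟫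
            + g t x ξ * fderiv ℝ (fun y => f t y ξ) x ξ := by
        rw [fderiv_fun_mul (hfdx x ξ) (hgdx x ξ)]
        rw [ContinuousLinearMap.add_apply, ContinuousLinearMap.smul_apply,
          ContinuousLinearMap.smul_apply, smul_eq_mul, smul_eq_mul, hgx]
      have hJ2x : fderiv ℝ (fun η => f t x η * g t x η) ξ (gradient (fun y => φt t y) x)
          = f t x ξ * (-⟪gradient (fun y => φt t y) x, v t x⟫)
            + g t x ξ * fderiv ℝ (fun η => f t x η) ξ (gradient (fun y => φt t y) x) := by
        rw [fderiv_fun_mul (hfdξ x ξ) (hgdξ x ξ)]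
        rw [ContinuousLinearMap.add_apply, ContinuousLinearMap.smul_apply,
          ContinuousLinearMap.smul_apply, smul_eq_mul, smul_eq_mul, hgξ]
      have hΦ'unfold : Φ' t (x, ξ) = fderiv ℝ Ff (t, x, ξ) (1, 0, 0) * g t x ξ
          + f t x ξ * ⟪v t x - ξ, fderiv ℝ Vf (t, x) (1, 0)⟫ := rfl
      rw [hΦ'unfold, hft, hvt_val, hJ1x, hJ2x]
      have e1 : ⟪v t x - ξ, -gradient (fun y => p t y) x - fderiv ℝ (fun y => v t y) x (v t x)⟫
          = -⟪v t x - ξ, gradient (fun y => p t y) x⟫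
            - ⟪v t x - ξ, fderiv ℝ (fun y => v t y) x (v t x)⟫ := by
        rw [inner_sub_right, inner_neg_right]
      have e2 : ⟪ξ - v t x, fderiv ℝ (fun y => v t y) x (ξ - v t x)⟫
          = ⟪v t x - ξ, fderiv ℝ (fun y => v t y) x (v t x)⟫
            - ⟪v t x - ξ, fderiv ℝ (fun y => v t y) x ξ⟫ := by
        rw [map_sub, inner_sub_right, ← neg_sub (v t x) ξ, inner_neg_left, inner_neg_left]
        ring
      have e3 : ⟪gradient (fun y => φt t y) x, v t x⟫
          = ⟪v t x, gradient (fun y => φt t y) x⟫ := real_inner_comm _ _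
      rw [e1, e2, e3]
      ring
    -- split the integral and conclude
    have hsplit : (∫ q, Φ' t q ∂(prodDom d))
        = (-(∫ q, fderiv ℝ (fun y => f t y q.2 * g t y q.2) q.1 q.2 ∂(prodDom d))
            + (1/ε) * (∫ q, fderiv ℝ (fun η => f t q.1 η * g t q.1 η) q.2
                (gradient (fun y => φt t y) q.1) ∂(prodDom d)))
          + (-(∫ q, f t q.1 q.2 *
                ⟪q.2 - v t q.1, fderiv ℝ (fun y => v t y) q.1 (q.2 - v t q.1)⟫ ∂(prodDom d))
            + (1/ε) * (∫ q, f t q.1 q.2 *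
                ⟪v t q.1, gradient (fun y => φt t y) q.1⟫ ∂(prodDom d))
            - ∫ q, f t q.1 q.2 *
                ⟪v t q.1 - q.2, gradient (fun y => p t y) q.1⟫ ∂(prodDom d)) := by
      have hJ1n : Integrable (fun q : E × E =>
          -(fderiv ℝ (fun y => f t y q.2 * g t y q.2) q.1 q.2)) (prodDom d) := hJ1int.neg
      have hJ2c : Integrable (fun q : E × E =>
          (1/ε) * (fderiv ℝ (fun η => f t q.1 η * g t q.1 η) q.2
            (gradient (fun y => φt t y) q.1))) (prodDom d) := hJ2int.const_mul _
      have hL : Integrable (fun q : E × E =>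
          -(fderiv ℝ (fun y => f t y q.2 * g t y q.2) q.1 q.2)
            + (1/ε) * (fderiv ℝ (fun η => f t q.1 η * g t q.1 η) q.2
              (gradient (fun y => φt t y) q.1))) (prodDom d) := hJ1n.add hJ2c
      have hA1n : Integrable (fun q : E × E => -(f t q.1 q.2 *
          ⟪q.2 - v t q.1, fderiv ℝ (fun y => v t y) q.1 (q.2 - v t q.1)⟫)) (prodDom d) :=
        hA1int.neg
      have hA2c : Integrable (fun q : E × E => (1/ε) * (f t q.1 q.2 *
          ⟪v t q.1, gradient (fun y => φt t y) q.1⟫)) (prodDom d) := hA2int.const_mul _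
      have hA12 : Integrable (fun q : E × E => -(f t q.1 q.2 *
          ⟪q.2 - v t q.1, fderiv ℝ (fun y => v t y) q.1 (q.2 - v t q.1)⟫)
            + (1/ε) * (f t q.1 q.2 *
              ⟪v t q.1, gradient (fun y => φt t y) q.1⟫)) (prodDom d) := hA1n.add hA2c
      have hR : Integrable (fun q : E × E => -(f t q.1 q.2 *
          ⟪q.2 - v t q.1, fderiv ℝ (fun y => v t y) q.1 (q.2 - v t q.1)⟫)
            + (1/ε) * (f t q.1 q.2 * ⟪v t q.1, gradient (fun y => φt t y) q.1⟫)
            - f t q.1 q.2 * ⟪v t q.1 - q.2, gradient (fun y => p t y) q.1⟫) (prodDom d) :=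
        hA12.sub hA3int
      rw [integral_congr_ae (Filter.Eventually.of_forall hPW)]
      rw [integral_add hL hR]
      congr 1
      · rw [integral_add hJ1n hJ2c, integral_neg, integral_const_mul]
      · rw [integral_sub hA12 hA3int, integral_add hA1n hA2c, integral_neg, integral_const_mul]
    have eA1 : (∫ q, f t q.1 q.2 *
          ⟪q.2 - v t q.1, fderiv ℝ (fun y => v t y) q.1 (q.2 - v t q.1)⟫ ∂(prodDom d))
        = ∫ x in fundDom d, ∫ ξ, f t x ξ *
            ⟪ξ - v t x, fderiv ℝ (fun y => v t y) x (ξ - v t x)⟫ :=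
      MeasureTheory.integral_prod _ hA1int
    have eA2 : (∫ q, f t q.1 q.2 * ⟪v t q.1, gradient (fun y => φt t y) q.1⟫ ∂(prodDom d))
        = ∫ x in fundDom d, ∫ ξ, f t x ξ * ⟪v t x, gradient (fun y => φt t y) x⟫ :=
      MeasureTheory.integral_prod _ hA2int
    have eA3 : (∫ q, f t q.1 q.2 * ⟪v t q.1 - q.2, gradient (fun y => p t y) q.1⟫ ∂(prodDom d))
        = ∫ x in fundDom d, ∫ ξ, f t x ξ * ⟪v t x - ξ, gradient (fun y => p t y) x⟫ :=
      MeasureTheory.integral_prod _ hA3int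
    rw [hsplit, IBP1, IBP2, eA1, eA2, eA3]
    ring
  -- assemble
  have hfeq : (fun s =>
      (1/2) * (∫ x in fundDom d, ∫ ξ, f s x ξ * ‖ξ - v s x‖ ^ 2)
        + (1/2) * (∫ x in fundDom d, (∫ ξ, f s x ξ) * ‖gradient (fun y => φt s y) x‖ ^ 2))
      = fun s => C₀ + ∫ q, Φ s q ∂(prodDom d) := funext hfun
  rw [hfeq, ← hval]
  simpa using hDCT

end Main


/-- derivative identity for the modulated kinetic energy: if `v` solves the
incompressible Euler equations with pressure `p`, and `f` solves
`∂_t f + ξ·∇_x f − (1/ε)∇φ̃·∇_ξ f = 0` with conserved total energy, then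
`d/dt [½∫∫f|ξ−v|² + ½∫ρ|∇φ̃|²] = −∫∫f(ξ−v)·∇v(ξ−v) + (1/ε)∫∫f v·∇φ̃ − ∫∫f(v−ξ)·∇p`. -/
theorem modulated_energy_derivative_identity (d : ℕ) (ε : ℝ) (hε : 0 < ε)
    (v : ℝ → EuclideanSpace ℝ (Fin d) → EuclideanSpace ℝ (Fin d))
    (p : ℝ → EuclideanSpace ℝ (Fin d) → ℝ)
    (hv : ContDiff ℝ 1 (fun q : ℝ × EuclideanSpace ℝ (Fin d) => v q.1 q.2))
    (hp : ContDiff ℝ 1 (fun q : ℝ × EuclideanSpace ℝ (Fin d) => p q.1 q.2))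
    (hvper : ∀ t, ZPeriodic (v t)) (hpper : ∀ t, ZPeriodic (p t))
    (hEuler : ∀ t x,
      deriv (fun s => v s x) t + fderiv ℝ (fun y => v t y) x (v t x)
        = -gradient (fun y => p t y) x)
    (hdiv : ∀ t x, (∑ i, fderiv ℝ (fun y => v t y) x (EuclideanSpace.single i 1) i) = 0)
    (f : ℝ → EuclideanSpace ℝ (Fin d) → EuclideanSpace ℝ (Fin d) → ℝ)
    (φt : ℝ → EuclideanSpace ℝ (Fin d) → ℝ)
    (hf : ContDiff ℝ 1 (fun q : ℝ × EuclideanSpace ℝ (Fin d) × EuclideanSpace ℝ (Fin d) =>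
      f q.1 q.2.1 q.2.2))
    (hφ : ContDiff ℝ 1 (fun q : ℝ × EuclideanSpace ℝ (Fin d) => φt q.1 q.2))
    (hfpos : ∀ t x ξ, 0 ≤ f t x ξ)
    (hfper : ∀ t ξ, ZPeriodic (fun x => f t x ξ)) (hφper : ∀ t, ZPeriodic (φt t))
    (hsupp : ∃ K : ℝ, ∀ t x ξ, K ≤ ‖ξ‖ → f t x ξ = 0)
    (hPDE : ∀ t x ξ,
      deriv (fun s => f s x ξ) t + ⟪ξ, gradient (fun y => f t y ξ) x⟫
        - (1/ε) * ⟪gradient (fun y => φt t y) x, gradient (fun η => f t x η) ξ⟫ = 0)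
    (hEnergy : ∀ t : ℝ,
      (1/2) * (∫ x in fundDom d, ∫ ξ, f t x ξ * ‖ξ‖ ^ 2)
          + (1/2) * (∫ x in fundDom d, (∫ ξ, f t x ξ) * ‖gradient (fun y => φt t y) x‖ ^ 2)
        = (1/2) * (∫ x in fundDom d, ∫ ξ, f 0 x ξ * ‖ξ‖ ^ 2)
          + (1/2) * (∫ x in fundDom d, (∫ ξ, f 0 x ξ) * ‖gradient (fun y => φt 0 y) x‖ ^ 2)) :
    ∀ t : ℝ,
      HasDerivAt (fun s =>
          (1/2) * (∫ x in fundDom d, ∫ ξ, f s x ξ * ‖ξ - v s x‖ ^ 2)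
            + (1/2) * (∫ x in fundDom d, (∫ ξ, f s x ξ) * ‖gradient (fun y => φt s y) x‖ ^ 2))
        (-(∫ x in fundDom d, ∫ ξ, f t x ξ *
              ⟪ξ - v t x, fderiv ℝ (fun y => v t y) x (ξ - v t x)⟫)
          + (1/ε) * (∫ x in fundDom d, ∫ ξ, f t x ξ *
              ⟪v t x, gradient (fun y => φt t y) x⟫)
          - ∫ x in fundDom d, ∫ ξ, f t x ξ *
              ⟪v t x - ξ, gradient (fun y => p t y) x⟫) t := by
  intro t
  exact main_aux ε hε v p hv hp hvper hEuler f φt hf hφ hfper hsupp hPDE hEnergy t
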